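/- Let F_q be a finite field, A, B ⊆ F_q, and ξ ∈ F_q* with |A − ξB| > q/2. Suppose there exist a ∈ −A with a ∉ A + A, and a representation −a = (a₁ + a₂) + ξ(b₁ + b₂) with a₁, a₂ ∈ A, b₁, b₂ ∈ B. Then b₁ + b₂ ≠ 0 and ξ = −(a₁ + a₂ + a₃)/(b₁ + b₂) where a₃ = −a ∈ A; moreover (b₁+b₂)(A − ξB) ⊆ 5·(AB) and thus 10·(AB) = F_q. -/

import Mathlib

open Pointwise in
theorem stmt_18 {F : Type*} [Field F] [Fintype F] [DecidableEq F] (q : ℕ)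
    (hq : Fintype.card F = q) (A B : Finset F) (ξ : F) (hξ : ξ ≠ 0)
    (hcard : (q : ℚ) / 2 < (((A ×ˢ B).image (fun p => p.1 - ξ * p.2)).card : ℚ))
    (a : F) (ha : a ∈ -A) (hna : a ∉ A + A)
    (a₁ : F) (ha₁ : a₁ ∈ A) (a₂ : F) (ha₂ : a₂ ∈ A)
    (b₁ : F) (hb₁ : b₁ ∈ B) (b₂ : F) (hb₂ : b₂ ∈ B)
    (hrep : a = (a₁ + a₂) + ξ * (b₁ + b₂)) :
    b₁ + b₂ ≠ 0 ∧ ξ = -(a₁ + a₂ + (-a)) / (b₁ + b₂) ∧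
    (∀ a' ∈ A, ∀ b' ∈ B, ∃ c d : Fin 5 → F, (∀ i, c i ∈ A) ∧ (∀ i, d i ∈ B) ∧
      (b₁ + b₂) * (a' - ξ * b') = ∑ i, c i * d i) ∧
    (∀ x : F, ∃ c d : Fin 10 → F, (∀ i, c i ∈ A) ∧ (∀ i, d i ∈ B) ∧
      x = ∑ i, c i * d i) := by
  have hna' : -a ∈ A := by
    rw [Finset.mem_neg] at ha
    obtain ⟨x, hx, rfl⟩ := ha
    simpa using hx
  have hb0 : b₁ + b₂ ≠ 0 := by
    intro h
    apply hna
    rw [Finset.mem_add]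
    exact ⟨a₁, ha₁, a₂, ha₂, by rw [hrep, h]; ring⟩
  have key : ∀ a' ∈ A, ∀ b' ∈ B, ∃ c d : Fin 5 → F, (∀ i, c i ∈ A) ∧ (∀ i, d i ∈ B) ∧
      (b₁ + b₂) * (a' - ξ * b') = ∑ i, c i * d i := by
    intro a' ha'' b' hb'
    refine ⟨![a', a', a₁, a₂, -a], ![b₁, b₂, b', b', b'], ?_, ?_, ?_⟩
    · intro i; fin_cases i <;> simpa
    · intro i; fin_cases i <;> simpa
    · rw [Fin.sum_univ_five]
      simp only [Matrix.cons_val_zero, Matrix.cons_val_one, Matrix.head_cons,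
        Matrix.cons_val_two, Matrix.tail_cons, Matrix.cons_val_three, Matrix.cons_val_four]
      linear_combination b' * hrep
  refine ⟨hb0, by field_simp; linear_combination -hrep, key, ?_⟩
  intro x
  set S : Finset F := (A ×ˢ B).image (fun p => p.1 - ξ * p.2) with hS
  set T : Finset F := S.image (fun s => (b₁ + b₂) * s) with hT
  have hTcard : T.card = S.card := by
    apply Finset.card_image_of_injective
    exact fun u v h => by
      exact mul_left_cancel₀ hb0 h
  set T2 : Finset F := T.image (fun t => x - t) with hT2
  have hT2card : T2.card = T.card := by
    apply Finset.card_image_of_injective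
    exact fun u v h => by simpa using h
  have hqS : q < 2 * S.card := by
    have : (q : ℚ) < 2 * S.card := by linarith
    exact_mod_cast this
  have hinter : (T ∩ T2).Nonempty := by
    rw [← Finset.card_pos]
    have h1 := Finset.card_union_add_card_inter T T2
    have h2 : (T ∪ T2).card ≤ q := by
      rw [← hq, ← Finset.card_univ]
      exact Finset.card_le_card (Finset.subset_univ _)
    omega
  obtain ⟨t, ht⟩ := hinter
  rw [Finset.mem_inter] at ht
  obtain ⟨ht1, ht2⟩ := ht
  rw [hT2, Finset.mem_image] at ht2
  obtain ⟨t', ht', hxt⟩ := ht2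
  have getrep : ∀ u ∈ T, ∃ a' ∈ A, ∃ b' ∈ B, u = (b₁ + b₂) * (a' - ξ * b') := by
    intro u hu
    rw [hT, Finset.mem_image] at hu
    obtain ⟨s, hs, rfl⟩ := hu
    rw [hS, Finset.mem_image] at hs
    obtain ⟨p, hp, rfl⟩ := hs
    rw [Finset.mem_product] at hp
    exact ⟨p.1, hp.1, p.2, hp.2, rfl⟩
  obtain ⟨a₃, ha₃, b₃, hb₃, hrep3⟩ := getrep t ht1
  obtain ⟨a₄, ha₄, b₄, hb₄, hrep4⟩ := getrep t' ht'
  obtain ⟨c1, d1, hc1, hd1, he1⟩ := key a₃ ha₃ b₃ hb₃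
  obtain ⟨c2, d2, hc2, hd2, he2⟩ := key a₄ ha₄ b₄ hb₄
  refine ⟨![c1 0, c1 1, c1 2, c1 3, c1 4, c2 0, c2 1, c2 2, c2 3, c2 4],
    ![d1 0, d1 1, d1 2, d1 3, d1 4, d2 0, d2 1, d2 2, d2 3, d2 4], ?_, ?_, ?_⟩
  · intro i; fin_cases i <;> first | exact hc1 0 | exact hc1 1 | exact hc1 2 | exact hc1 3 | exact hc1 4 | exact hc2 0 | exact hc2 1 | exact hc2 2 | exact hc2 3 | exact hc2 4
  · intro i; fin_cases i <;> first | exact hd1 0 | exact hd1 1 | exact hd1 2 | exact hd1 3 | exact hd1 4 | exact hd2 0 | exact hd2 1 | exact hd2 2 | exact hd2 3 | exact hd2 4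
  · rw [Fin.sum_univ_five] at he1 he2
    have hx : x = (b₁ + b₂) * (a₃ - ξ * b₃) + (b₁ + b₂) * (a₄ - ξ * b₄) := by
      rw [← hrep3, ← hrep4, ← hxt]; ring
    simp only [Fin.sum_univ_succ, Fin.sum_univ_zero, Matrix.cons_val_zero,
      Matrix.cons_val_succ, Fin.succ_zero_eq_one]
    linear_combination hx + he1 + he2
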